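/- If f : ℝ^n → ℝ is L-smooth and convex, then its convex conjugate f* is (1/L)-strongly convex. -/

import Mathlib

open RealInnerProductSpace

-- Descent lemma
lemma descent_aux {E : Type*} [NormedAddCommGroup E] [InnerProductSpace ℝ E] [CompleteSpace E]
    (f : E → ℝ) (L : ℝ) (hL : 0 < L)
    (hdiff : Differentiable ℝ f)
    (hsmooth : ∀ x x', ‖gradient f x - gradient f x'‖ ≤ L * ‖x - x'‖)
    (x z : E) :
    f z ≤ f x + ⟪gradient f x, z - x⟫ + L / 2 * ‖z - x‖ ^ 2 := by
  set u := z - x with hu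
  have hgradcont : Continuous (gradient f) := by
    apply (LipschitzWith.of_dist_le_mul (K := L.toNNReal) ?_).continuous
    intro a b
    rw [dist_eq_norm, dist_eq_norm, Real.coe_toNNReal _ hL.le]
    exact hsmooth a b
  have hc : Continuous fun t : ℝ => (⟪gradient f (x + t • u), u⟫ : ℝ) := by
    exact Continuous.inner (hgradcont.comp (by continuity)) continuous_const
  have hderiv : ∀ t ∈ Set.uIcc (0:ℝ) 1,
      HasDerivAt (fun t : ℝ => f (x + t • u)) (⟪gradient f (x + t • u), u⟫) t := by
    intro t _
    have hcurve : HasDerivAt (fun t : ℝ => x + t • u) u t := by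
      simpa using ((hasDerivAt_id t).smul_const u).const_add x
    have hf : HasFDerivAt f (InnerProductSpace.toDual ℝ E (gradient f (x + t • u))) (x + t • u) :=
      ((hdiff (x + t • u)).hasGradientAt).hasFDerivAt
    simpa [Function.comp_def] using hf.comp_hasDerivAt t hcurve
  have hFTC : f (x + (1:ℝ) • u) - f (x + (0:ℝ) • u)
      = ∫ t in (0:ℝ)..1, ⟪gradient f (x + t • u), u⟫ :=
    (intervalIntegral.integral_eq_sub_of_hasDerivAt hderiv (hc.intervalIntegrable 0 1)).symm
  have hbound : ∫ t in (0:ℝ)..1, (⟪gradient f (x + t • u), u⟫ : ℝ)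
      ≤ ∫ t in (0:ℝ)..1, (⟪gradient f x, u⟫ + L * ‖u‖^2 * t) := by
    apply intervalIntegral.integral_mono_on (by norm_num) (hc.intervalIntegrable 0 1)
      ((by continuity : Continuous fun t : ℝ => (⟪gradient f x, u⟫ + L * ‖u‖^2 * t)).intervalIntegrable 0 1)
    intro t ht
    have h1 : (⟪gradient f (x + t • u), u⟫ : ℝ) - ⟪gradient f x, u⟫
        = ⟪gradient f (x + t • u) - gradient f x, u⟫ := by
      rw [inner_sub_left]
    have h2 : (⟪gradient f (x + t • u) - gradient f x, u⟫ : ℝ)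
        ≤ ‖gradient f (x + t • u) - gradient f x‖ * ‖u‖ := real_inner_le_norm _ _
    have h3 : ‖gradient f (x + t • u) - gradient f x‖ ≤ L * ‖t • u‖ := by
      simpa using hsmooth (x + t • u) x
    have h4 : ‖t • u‖ = t * ‖u‖ := by
      rw [norm_smul, Real.norm_eq_abs, abs_of_nonneg ht.1]
    rw [h4] at h3
    have hpow : ‖u‖^2 = ‖u‖*‖u‖ := sq ‖u‖
    nlinarith [norm_nonneg u, ht.1, ht.2, norm_nonneg (gradient f (x + t • u) - gradient f x)]
  have hval : ∫ t in (0:ℝ)..1, (⟪gradient f x, u⟫ + L * ‖u‖^2 * t)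
      = ⟪gradient f x, u⟫ + L / 2 * ‖u‖^2 := by
    rw [intervalIntegral.integral_add (intervalIntegrable_const)
      ((intervalIntegral.intervalIntegrable_id).const_mul _)]
    rw [intervalIntegral.integral_const_mul, integral_id,
      intervalIntegral.integral_const]
    norm_num
    ring
  have := hFTC
  simp only [one_smul, zero_smul, add_zero] at this
  have hz : x + u = z := by rw [hu]; abel
  rw [hz] at this
  linarith [hbound, hval.le, hval.ge, this.le, this.ge]

-- Key inequality: fstar y ≥ ⟪x,y⟫ - f x + 1/(2L) ‖y - ∇f x‖²
lemma key_aux {E : Type*} [NormedAddCommGroup E] [InnerProductSpace ℝ E] [CompleteSpace E]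
    (f : E → ℝ) (L : ℝ) (hL : 0 < L)
    (hdiff : Differentiable ℝ f)
    (hsmooth : ∀ x x', ‖gradient f x - gradient f x'‖ ≤ L * ‖x - x'‖)
    (fstar : E → ℝ)
    (hfstar : ∀ y, IsLUB (Set.range fun x => ⟪x, y⟫ - f x) (fstar y))
    (x y : E) :
    ⟪x, y⟫ - f x + 1 / (2 * L) * ‖y - gradient f x‖ ^ 2 ≤ fstar y := by
  set w := y - gradient f x with hw
  set u := (1/L) • w with hud
  set z := x + u with hz
  have hub : ⟪z, y⟫ - f z ≤ fstar y := (hfstar y).1 ⟨z, rfl⟩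
  have hdesc : f z ≤ f x + ⟪gradient f x, z - x⟫ + L / 2 * ‖z - x‖ ^ 2 :=
    descent_aux f L hL hdiff hsmooth x z
  have hzx : z - x = u := by rw [hz]; abel
  rw [hzx] at hdesc
  have h1 : (⟪z, y⟫ : ℝ) = ⟪x, y⟫ + ⟪u, y⟫ := by rw [hz, inner_add_left]
  have h2 : (⟪gradient f x, u⟫ : ℝ) = (1/L) * ⟪gradient f x, w⟫ := by
    rw [hud, real_inner_smul_right]
  have h3 : (⟪u, y⟫ : ℝ) = (1/L) * ⟪w, y⟫ := by rw [hud, real_inner_smul_left]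
  have h4 : ‖u‖ ^ 2 = (1/L)^2 * ‖w‖ ^ 2 := by
    rw [hud, norm_smul, mul_pow, Real.norm_eq_abs, sq_abs]
  have h5 : (⟪w, y⟫ : ℝ) - ⟪gradient f x, w⟫ = ‖w‖ ^ 2 := by
    have e0 : (⟪w, w⟫ : ℝ) = ‖w‖ ^ 2 := real_inner_self_eq_norm_sq w
    have e1 : (⟪w, w⟫ : ℝ) = ⟪w, y⟫ - ⟪w, gradient f x⟫ := by
      rw [hw, inner_sub_right]
    linarith [e0, e1, real_inner_comm w (gradient f x)]
  have hLne : L ≠ 0 := hL.ne'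
  have : ⟪x, y⟫ - f x + 1 / (2 * L) * ‖w‖ ^ 2 ≤ ⟪z, y⟫ - f z := by
    rw [h1]
    have : (1/L) * ⟪w, y⟫ - (1/L) * ⟪gradient f x, w⟫ - L/2 * ((1/L)^2 * ‖w‖^2)
        = 1/(2*L) * ‖w‖^2 := by
      rw [← mul_sub, h5]; field_simp; ring
    nlinarith [hdesc, h2, h3, h4]
  linarith

lemma norm_combo_aux {E : Type*} [NormedAddCommGroup E] [InnerProductSpace ℝ E]
    (p q : E) (t s : ℝ) (ht : 0 ≤ t) (hs : 0 ≤ s) (hts : t + s = 1) :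
    t * s * ‖p - q‖ ^ 2 ≤ t * ‖p‖ ^ 2 + s * ‖q‖ ^ 2 := by
  have h1 : ‖p - q‖ ^ 2 = ‖p‖^2 - 2 * ⟪p, q⟫ + ‖q‖^2 := by
    rw [norm_sub_sq_real]
  have h2 : (0:ℝ) ≤ ‖t • p + s • q‖ ^ 2 := sq_nonneg _
  have h3 : ‖t • p + s • q‖ ^ 2 = t^2 * ‖p‖^2 + 2*t*s*⟪p, q⟫ + s^2 * ‖q‖^2 := by
    rw [norm_add_sq_real, real_inner_smul_left, real_inner_smul_right,
      norm_smul, norm_smul, Real.norm_eq_abs, Real.norm_eq_abs,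
      abs_of_nonneg ht, abs_of_nonneg hs, mul_pow, mul_pow]
    ring
  have hs' : s = 1 - t := by linarith
  have key : t * ‖p‖^2 + s*‖q‖^2 - t*s*‖p-q‖^2 = ‖t • p + s • q‖^2 := by
    rw [h3, h1, hs']; ring
  linarith [h2, key]

/-- If `f : ℝ^n → ℝ` is `L`-smooth and convex, then its convex conjugate `f*`
is `(1/L)`-strongly convex. -/
theorem smooth_convex_conjugate_strongly_convex
    (n : ℕ) (f : EuclideanSpace ℝ (Fin n) → ℝ) (L : ℝ) (hL : 0 < L)
    (hconv : ConvexOn ℝ Set.univ f)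
    (hdiff : Differentiable ℝ f)
    (hsmooth : ∀ x x', ‖gradient f x - gradient f x'‖ ≤ L * ‖x - x'‖)
    (fstar : EuclideanSpace ℝ (Fin n) → ℝ)
    (hfstar : ∀ y, IsLUB (Set.range fun x => ⟪x, y⟫ - f x) (fstar y)) :
    ConvexOn ℝ Set.univ (fun y => fstar y - 1 / L / 2 * ‖y‖ ^ 2) := by
  refine ⟨convex_univ, ?_⟩
  intro a _ b _ t s ht hs hts
  simp only [smul_eq_mul]
  set y := t • a + s • b with hy
  set c : ℝ := 1 / (2 * L) with hc
  have hcL : 1 / L / 2 = c := by rw [hc]; ring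
  have hnorm_y : ‖y‖ ^ 2 = t * ‖a‖^2 + s * ‖b‖^2 - t * s * ‖a - b‖^2 := by
    have h3 : ‖t • a + s • b‖ ^ 2 = t^2 * ‖a‖^2 + 2*t*s*⟪a, b⟫ + s^2 * ‖b‖^2 := by
      rw [norm_add_sq_real, real_inner_smul_left, real_inner_smul_right,
        norm_smul, norm_smul, Real.norm_eq_abs, Real.norm_eq_abs,
        abs_of_nonneg ht, abs_of_nonneg hs, mul_pow, mul_pow]
      ring
    have h1 : ‖a - b‖ ^ 2 = ‖a‖^2 - 2 * ⟪a, b⟫ + ‖b‖^2 := by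
      rw [norm_sub_sq_real]
    have hs' : s = 1 - t := by linarith
    rw [hy, h3, h1, hs']; ring
  -- main bound on fstar y
  have hmain : fstar y ≤ t * fstar a + s * fstar b - c * (t * s * ‖a - b‖^2) := by
    apply (hfstar y).2
    rintro _ ⟨x, rfl⟩
    have hka := key_aux f L hL hdiff hsmooth fstar hfstar x a
    have hkb := key_aux f L hL hdiff hsmooth fstar hfstar x b
    have hcombo := norm_combo_aux (a - gradient f x) (b - gradient f x) t s ht hs hts
    have habv : (a - gradient f x) - (b - gradient f x) = a - b := by abel
    rw [habv] at hcombo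
    have hinner : (⟪x, y⟫ : ℝ) = t * ⟪x, a⟫ + s * ⟪x, b⟫ := by
      rw [hy, inner_add_right, real_inner_smul_right, real_inner_smul_right]
    have hcpos : 0 < c := by rw [hc]; positivity
    set A := ‖a - gradient f x‖ ^ 2 with hA
    set B := ‖b - gradient f x‖ ^ 2 with hB
    have hta' : t * ⟪x, a⟫ - t * f x + c * (t * A) ≤ t * fstar a := by
      calc t * ⟪x, a⟫ - t * f x + c * (t * A) = t * (⟪x, a⟫ - f x + 1 / (2 * L) * A) := by
            rw [hc]; ring
        _ ≤ t * fstar a := mul_le_mul_of_nonneg_left hka ht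
    have htb' : s * ⟪x, b⟫ - s * f x + c * (s * B) ≤ s * fstar b := by
      calc s * ⟪x, b⟫ - s * f x + c * (s * B) = s * (⟪x, b⟫ - f x + 1 / (2 * L) * B) := by
            rw [hc]; ring
        _ ≤ s * fstar b := mul_le_mul_of_nonneg_left hkb hs
    have hcmb' : c * (t * s * ‖a - b‖ ^ 2) ≤ c * (t * A) + c * (s * B) := by
      calc c * (t * s * ‖a - b‖ ^ 2) ≤ c * (t * A + s * B) :=
            mul_le_mul_of_nonneg_left hcombo hcpos.le
        _ = c * (t * A) + c * (s * B) := by ring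
    have hfx : t * f x + s * f x = f x := by rw [← add_mul, hts, one_mul]
    simp only [hinner]
    linarith [hta', htb', hcmb', hfx]
  rw [hcL]
  calc fstar y - c * ‖y‖^2
      ≤ t * fstar a + s * fstar b - c * (t * s * ‖a - b‖^2) - c * ‖y‖^2 := by linarith
    _ = t * (fstar a - c * ‖a‖^2) + s * (fstar b - c * ‖b‖^2) := by
        rw [hnorm_y]; ring
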